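/- Let G be a finitely generated subgroup of ℝ^n with G ∩ ℤ^n = {0}. Then for any finite subset F ⊂ G, any ε > 0, and any full rank sublattice Γ ⊂ ℤ^n, one has F^{*,ε} + Γ = ℝ^n, i.e., every point of ℝ^n is the sum of an element of the ε-approximate dual of F and an element of Γ. -/

import Mathlib

open Submodule Module InnerProductSpace Filter Topology RealInnerProductSpace

def intPoints (n : ℕ) : Set (EuclideanSpace ℝ (Fin n)) :=
  {x | ∀ i, ∃ k : ℤ, x i = (k : ℝ)}

def IsFullLattice {n : ℕ} (L : AddSubgroup (EuclideanSpace ℝ (Fin n))) : Prop :=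
  ∃ b : Module.Basis (Fin n) ℝ (EuclideanSpace ℝ (Fin n)),
    L = AddSubgroup.closure (Set.range b)

def approxDual {n : ℕ} (S : Set (EuclideanSpace ℝ (Fin n))) (ε : ℝ) :
    Set (EuclideanSpace ℝ (Fin n)) :=
  {x | ∀ g ∈ S, ∃ k : ℤ, |(inner ℝ x g : ℝ) - (k : ℝ)| ≤ ε}

private lemma discrete_gap {E : Type*} [NormedAddCommGroup E] [InnerProductSpace ℝ E]
    [FiniteDimensional ℝ E] (H : AddSubgroup E) (hH : IsClosed (H : Set E))
    (V : Submodule ℝ E) (hV : ∀ v : E, (∀ t : ℝ, t • v ∈ H) → v ∈ V)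
    (Λ : AddSubgroup E) (hΛH : ∀ y ∈ Λ, y ∈ H) (hΛperp : ∀ y ∈ Λ, y ∈ Vᗮ) :
    ∃ δ > 0, ∀ y ∈ Λ, ‖y‖ < δ → y = 0 := by
  by_contra hcon
  push_neg at hcon
  have hseq : ∀ k : ℕ, ∃ y, y ∈ Λ ∧ ‖y‖ < 1 / (k + 1 : ℝ) ∧ y ≠ 0 := by
    intro k
    obtain ⟨y, hy1, hy2, hy3⟩ := hcon (1 / (k + 1 : ℝ)) (by positivity)
    exact ⟨y, hy1, hy2, hy3⟩
  choose y hyΛ hylt hyne using hseq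
  have hnorm_pos : ∀ k, 0 < ‖y k‖ := fun k => norm_pos_iff.2 (hyne k)
  let u : ℕ → E := fun k => ‖y k‖⁻¹ • y k
  have husphere : ∀ k, u k ∈ Metric.sphere (0 : E) 1 := by
    intro k
    simp only [u, mem_sphere_iff_norm, sub_zero, norm_smul, norm_inv, norm_norm]
    exact inv_mul_cancel₀ (hnorm_pos k).ne'
  obtain ⟨ul, hul, φ, hφ, hconv⟩ :=
    (isCompact_sphere (0 : E) 1).tendsto_subseq husphere
  have hr0 : Tendsto (fun k => ‖y (φ k)‖) atTop (𝓝 0) := by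
    have h1 : Tendsto (fun k : ℕ => 1 / (k + 1 : ℝ)) atTop (𝓝 0) :=
      tendsto_one_div_add_atTop_nhds_zero_nat
    have h2 : Tendsto (fun k => 1 / ((φ k : ℝ) + 1)) atTop (𝓝 0) :=
      h1.comp hφ.tendsto_atTop
    exact squeeze_zero (fun k => (hnorm_pos _).le) (fun k => (hylt (φ k)).le) h2
  have hline : ∀ t : ℝ, t • ul ∈ H := by
    intro t
    set c : ℕ → ℝ := fun k => (⌊t / ‖y (φ k)‖⌋ : ℝ) * ‖y (φ k)‖ with hc
    have hz : ∀ k, c k • u (φ k) ∈ H := by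
      intro k
      have h1 : c k • u (φ k) = (⌊t / ‖y (φ k)‖⌋ : ℤ) • y (φ k) := by
        rw [← Int.cast_smul_eq_zsmul ℝ]
        simp only [hc, u, smul_smul]
        rw [mul_assoc, mul_inv_cancel₀ (hnorm_pos (φ k)).ne', mul_one]
      rw [h1]
      exact AddSubgroup.zsmul_mem H (hΛH _ (hyΛ _)) _
    have hct : Tendsto c atTop (𝓝 t) := by
      have hbound : ∀ k, ‖c k - t‖ ≤ ‖y (φ k)‖ := by
        intro k
        have hpos := hnorm_pos (φ k)
        rw [Real.norm_eq_abs]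
        have h1 : c k - t = (↑⌊t / ‖y (φ k)‖⌋ - t / ‖y (φ k)‖) * ‖y (φ k)‖ := by
          rw [sub_mul, div_mul_cancel₀ _ hpos.ne']
        rw [h1, abs_mul, abs_of_pos hpos]
        have h2 : |(⌊t / ‖y (φ k)‖⌋ : ℝ) - t / ‖y (φ k)‖| ≤ 1 := by
          rw [abs_le]
          constructor
          · linarith [Int.lt_floor_add_one (t / ‖y (φ k)‖)]
          · linarith [Int.floor_le (t / ‖y (φ k)‖)]
        nlinarith
      have := squeeze_zero_norm hbound hr0
      have h3 : Tendsto (fun k => c k - t + t) atTop (𝓝 (0 + t)) := this.add_const t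
      simpa using h3
    have hlim : Tendsto (fun k => c k • u (φ k)) atTop (𝓝 (t • ul)) :=
      hct.smul hconv
    exact hH.mem_of_tendsto hlim (Filter.Eventually.of_forall hz)
  have hmemV : ul ∈ V := hV ul hline
  have hmemVperp : ul ∈ Vᗮ := by
    have hclosed : IsClosed (Vᗮ : Set E) := Vᗮ.closed_of_finiteDimensional
    refine hclosed.mem_of_tendsto hconv (Filter.Eventually.of_forall fun k => ?_)
    exact Vᗮ.smul_mem _ (hΛperp _ (hyΛ _))
  have : ul = 0 := by
    have := Submodule.inner_right_of_mem_orthogonal hmemV hmemVperp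
    simpa [real_inner_self_eq_norm_sq] using
      (by rw [← real_inner_self_eq_norm_sq]; exact real_inner_comm ul ul ▸ this : ‖ul‖ ^ 2 = 0)
  rw [this] at hul
  simp at hul

theorem lattice_dual {E : Type*} [NormedAddCommGroup E] [InnerProductSpace ℝ E]
    [FiniteDimensional ℝ E] (Λ : AddSubgroup E)
    (gap : ∃ δ > 0, ∀ y ∈ Λ, ‖y‖ < δ → y = 0) (w : E)
    (hw : ∀ ξ : E, ξ ∈ span ℝ (Λ : Set E) →
      (∀ l ∈ Λ, ∃ k : ℤ, ⟪ξ, l⟫_ℝ = (k : ℝ)) → ∃ k : ℤ, ⟪ξ, w⟫_ℝ = (k : ℝ))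
    (hwW : w ∈ span ℝ (Λ : Set E)) : w ∈ Λ := by
  classical
  obtain ⟨δ, hδ, hgap⟩ := gap
  set W : Submodule ℝ E := span ℝ (Λ : Set E) with hW
  let Λ₀ : Submodule ℤ ↥W :=
    (AddSubgroup.toIntSubmodule Λ).comap (W.subtype.restrictScalars ℤ)
  have hmem₀ : ∀ v : ↥W, v ∈ Λ₀ ↔ (v : E) ∈ Λ := fun v => Iff.rfl
  have hdisc : DiscreteTopology Λ₀ := by
    rw [discreteTopology_iff_isOpen_singleton_zero]
    have hset : {(0 : Λ₀)} = (Subtype.val : Λ₀ → ↥W) ⁻¹' Metric.ball (0 : ↥W) δ := by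
      ext v
      simp only [Set.mem_singleton_iff, Set.mem_preimage, Metric.mem_ball, dist_zero_right]
      constructor
      · rintro rfl; simpa using hδ
      · intro hv
        have h1 : ((v : ↥W) : E) ∈ Λ := (hmem₀ _).mp v.2
        have h2 : ‖((v : ↥W) : E)‖ < δ := hv
        have := hgap _ h1 h2
        ext
        exact_mod_cast congrArg Subtype.val (Subtype.ext this : (v : ↥W) = (0 : ↥W))
    rw [hset]
    exact continuous_subtype_val.isOpen_preimage _ Metric.isOpen_ball
  have h_img : W.subtype '' (Λ₀ : Set ↥W) = (Λ : Set E) := by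
    ext z
    constructor
    · rintro ⟨v, hv, rfl⟩; exact (hmem₀ _).mp hv
    · intro hz; exact ⟨⟨z, subset_span hz⟩, (hmem₀ _).mpr hz, rfl⟩
  have hzl : IsZLattice ℝ Λ₀ := by
    refine ⟨?_⟩
    apply Submodule.map_injective_of_injective (injective_subtype W)
    rw [Submodule.map_span, Submodule.map_top, range_subtype, h_img]
  have hfin : Module.Finite ℤ Λ₀ := ZLattice.module_finite ℝ Λ₀
  have hfree : Module.Free ℤ Λ₀ := ZLattice.module_free ℝ Λ₀
  let b := Module.Free.chooseBasis ℤ Λ₀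
  let B : Basis _ ℝ ↥W := b.ofZLatticeBasis ℝ Λ₀
  -- dual vectors
  let ξ : _ → ↥W := fun i =>
    (toDual ℝ ↥W).symm (LinearMap.toContinuousLinearMap (B.coord i))
  have hξ : ∀ i (v : ↥W), ⟪ξ i, v⟫_ℝ = B.repr v i := by
    intro i v
    rw [toDual_symm_apply]
    rfl
  have hξint : ∀ i, ∀ l ∈ Λ, ∃ k : ℤ, ⟪((ξ i : ↥W) : E), l⟫_ℝ = (k : ℝ) := by
    intro i l hl
    have hlW : l ∈ W := subset_span hl
    have hin : (⟨l, hlW⟩ : ↥W) ∈ Λ₀ := (hmem₀ _).mpr hl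
    refine ⟨b.repr ⟨⟨l, hlW⟩, hin⟩ i, ?_⟩
    have hco : ⟪((ξ i : ↥W) : E), l⟫_ℝ = ⟪ξ i, (⟨l, hlW⟩ : ↥W)⟫_ℝ :=
      (Submodule.coe_inner W (ξ i) ⟨l, hlW⟩).symm
    rw [hco, hξ]
    exact_mod_cast b.ofZLatticeBasis_repr_apply ℝ Λ₀ (⟨⟨l, hlW⟩, hin⟩ : Λ₀) i
  have hcoordZ : ∀ i, ∃ kk : ℤ, B.repr ⟨w, hwW⟩ i = (kk : ℝ) := by
    intro i
    obtain ⟨kk, hkk⟩ := hw ((ξ i : ↥W) : E) (ξ i).2 (hξint i)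
    refine ⟨kk, ?_⟩
    rw [← hξ i ⟨w, hwW⟩, Submodule.coe_inner]
    exact hkk
  choose k hk using hcoordZ
  have hsum : (⟨w, hwW⟩ : ↥W) = ∑ i, (k i : ℝ) • B i := by
    conv_lhs => rw [← B.sum_repr ⟨w, hwW⟩]
    exact Finset.sum_congr rfl fun i _ => by rw [hk]
  have hwsum : w = ∑ i, (k i : ℝ) • ((B i : ↥W) : E) := by
    have h2 := congrArg (Subtype.val : ↥W → E) hsum
    simpa using h2
  rw [hwsum]
  refine AddSubgroup.sum_mem Λ fun i _ => ?_
  have hBi : ((B i : ↥W) : E) ∈ Λ := by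
    have h3 : (B i : ↥W) = ((b i : ↥Λ₀) : ↥W) := b.ofZLatticeBasis_apply ℝ Λ₀ i
    rw [h3]
    exact (hmem₀ _).mp (b i).2
  rw [Int.cast_smul_eq_zsmul]
  exact AddSubgroup.zsmul_mem Λ hBi _

theorem mem_of_dual {E : Type*} [NormedAddCommGroup E] [InnerProductSpace ℝ E]
    [FiniteDimensional ℝ E] (H : AddSubgroup E) (hH : IsClosed (H : Set E)) (x : E)
    (hx : ∀ ξ : E, (∀ h ∈ H, ∃ k : ℤ, ⟪ξ, h⟫_ℝ = (k : ℝ)) → ∃ k : ℤ, ⟪ξ, x⟫_ℝ = (k : ℝ)) :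
    x ∈ H := by
  classical
  let V : Submodule ℝ E :=
    { carrier := {v | ∀ t : ℝ, t • v ∈ H}
      add_mem' := fun hv hw t => by
        simpa [smul_add] using H.add_mem (hv t) (hw t)
      zero_mem' := fun t => by simpa using H.zero_mem
      smul_mem' := fun c v hv t => by simpa [smul_smul] using hv (t * c) }
  have hVmem : ∀ v : E, (∀ t : ℝ, t • v ∈ H) → v ∈ V := fun v hv => hv
  have hVH : ∀ v ∈ V, v ∈ H := fun v hv => by simpa using hv 1
  let Λ : AddSubgroup E := H ⊓ Vᗮ.toAddSubgroup
  have hΛH : ∀ y ∈ Λ, y ∈ H := fun y hy => (AddSubgroup.mem_inf.mp hy).1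
  have hΛperp : ∀ y ∈ Λ, y ∈ Vᗮ := fun y hy => (AddSubgroup.mem_inf.mp hy).2
  have gap : ∃ δ > 0, ∀ y ∈ Λ, ‖y‖ < δ → y = 0 :=
    discrete_gap H hH V hVmem Λ hΛH hΛperp
  -- decompose x
  set v : E := ↑(orthogonalProjection V x) with hvdef
  have hvV : v ∈ V := SetLike.coe_mem _
  set w : E := x - v with hwdef
  have hwperp : w ∈ Vᗮ := V.sub_starProjection_mem_orthogonal x
  have hWV : span ℝ (Λ : Set E) ≤ Vᗮ := span_le.mpr fun z hz => hΛperp z hz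
  -- transfer the duality hypothesis to w
  have key : ∀ ξ' : E, ξ' ∈ Vᗮ → (∀ l ∈ Λ, ∃ kk : ℤ, ⟪ξ', l⟫_ℝ = (kk : ℝ)) →
      ∃ kk : ℤ, ⟪ξ', w⟫_ℝ = (kk : ℝ) := by
    intro ξ' hperp hlat
    have hH' : ∀ h ∈ H, ∃ kk : ℤ, ⟪ξ', h⟫_ℝ = (kk : ℝ) := by
      intro h hh
      have h1 : (↑(orthogonalProjection V h) : E) ∈ V := SetLike.coe_mem _
      have h2 : h - ↑(orthogonalProjection V h) ∈ Λ :=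
        AddSubgroup.mem_inf.mpr
          ⟨H.sub_mem hh (hVH _ h1), V.sub_starProjection_mem_orthogonal h⟩
      obtain ⟨kk, hkk⟩ := hlat _ h2
      refine ⟨kk, ?_⟩
      have hdec : h = ↑(orthogonalProjection V h) + (h - ↑(orthogonalProjection V h)) := by
        abel
      rw [hdec, inner_add_right, Submodule.inner_left_of_mem_orthogonal h1 hperp, zero_add]
      exact hkk
    obtain ⟨kk, hkk⟩ := hx ξ' hH'
    refine ⟨kk, ?_⟩
    rw [hwdef, inner_sub_right, Submodule.inner_left_of_mem_orthogonal hvV hperp, sub_zero]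
    exact hkk
  -- Step A : w lies in the span of Λ
  have hwW : w ∈ span ℝ (Λ : Set E) := by
    by_contra hnot
    set WΛ : Submodule ℝ E := span ℝ (Λ : Set E) with hWΛ
    set w₂ : E := w - ↑(orthogonalProjection WΛ w) with hw2def
    have hw₂perp : w₂ ∈ WΛᗮ := WΛ.sub_starProjection_mem_orthogonal w
    have hw₂ne : w₂ ≠ 0 := by
      intro h0
      apply hnot
      have h1 : w = ↑(orthogonalProjection WΛ w) := by
        rw [hw2def, sub_eq_zero] at h0
        exact h0
      rw [h1]
      exact SetLike.coe_mem _
    have hnz : ‖w₂‖ ≠ 0 := norm_ne_zero_iff.mpr hw₂ne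
    set ξ' : E := (2 * ‖w₂‖ ^ 2)⁻¹ • w₂ with hξ'def
    have hξ'V : ξ' ∈ Vᗮ := by
      refine Vᗮ.smul_mem _ (Submodule.sub_mem _ hwperp (hWV ?_))
      exact SetLike.coe_mem _
    have hlat : ∀ l ∈ Λ, ∃ kk : ℤ, ⟪ξ', l⟫_ℝ = (kk : ℝ) := by
      intro l hl
      refine ⟨0, ?_⟩
      have h0 : ⟪w₂, l⟫_ℝ = 0 :=
        Submodule.inner_left_of_mem_orthogonal (subset_span hl) hw₂perp
      simp [hξ'def, real_inner_smul_left, h0]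
    obtain ⟨kk, hkk⟩ := key ξ' hξ'V hlat
    have hval : ⟪ξ', w⟫_ℝ = 2⁻¹ := by
      have hproj : ⟪w₂, (↑(orthogonalProjection WΛ w) : E)⟫_ℝ = 0 :=
        Submodule.inner_left_of_mem_orthogonal (SetLike.coe_mem _) hw₂perp
      have hww : ⟪w₂, w⟫_ℝ = ‖w₂‖ ^ 2 := by
        have hdecomp : w = ↑(orthogonalProjection WΛ w) + w₂ := by
          rw [hw2def]; abel
        rw [hdecomp, inner_add_right, hproj, zero_add, real_inner_self_eq_norm_sq]
      rw [hξ'def, real_inner_smul_left, hww]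
      have h2 : ‖w₂‖ ^ 2 ≠ 0 := pow_ne_zero _ hnz
      field_simp
    rw [hval] at hkk
    have h3 : (2 * kk : ℤ) = 1 := by
      have : ((2 * kk : ℤ) : ℝ) = ((1 : ℤ) : ℝ) := by
        push_cast
        rw [← hkk]
        ring
      exact_mod_cast this
    omega
  have hfinal : w ∈ Λ :=
    lattice_dual Λ gap w (fun ξ hξW hl => key ξ (hWV hξW) hl) hwW
  have hxvw : x = v + w := by rw [hwdef]; abel
  rw [hxvw]
  exact H.add_mem (hVH v hvV) (hΛH w hfinal)

lemma abs_apply_le_norm {ι : Type*} [Fintype ι] (v : EuclideanSpace ℝ ι) (i : ι) :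
    |v i| ≤ ‖v‖ := by
  rw [EuclideanSpace.norm_eq, ← Real.sqrt_sq (abs_nonneg (v i))]
  apply Real.sqrt_le_sqrt
  have h1 : |v i| ^ 2 = ‖v i‖ ^ 2 := by rw [Real.norm_eq_abs]
  rw [h1]
  exact Finset.single_le_sum (fun j _ => sq_nonneg ‖v j‖) (Finset.mem_univ i)

lemma kernel_zero {n : ℕ} (G : AddSubgroup (EuclideanSpace ℝ (Fin n)))
    (hint : (G : Set _) ∩ intPoints n = {0})
    (Γ : AddSubgroup (EuclideanSpace ℝ (Fin n)))
    (hΓsub : (Γ : Set _) ⊆ intPoints n) (hΓ : IsFullLattice Γ)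
    (h : EuclideanSpace ℝ (Fin n)) (hG : h ∈ G)
    (hall : ∀ γ ∈ Γ, ∃ k : ℤ, ⟪γ, h⟫_ℝ = (k : ℝ)) : h = 0 := by
  classical
  obtain ⟨bb, hbb⟩ := hΓ
  have hbmem : ∀ j, bb j ∈ Γ := fun j => hbb ▸ AddSubgroup.subset_closure ⟨j, rfl⟩
  have hbz : ∀ j i, ∃ k : ℤ, bb j i = (k : ℝ) := fun j i => hΓsub (hbmem j) i
  choose M hM using hbz
  let Bmat : Matrix (Fin n) (Fin n) ℤ := Matrix.of fun i j => M j i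
  have hdet : ((Bmat.det : ℤ) : ℝ) ≠ 0 := by
    have hmat : Bmat.map (Int.cast : ℤ → ℝ) = (PiLp.basisFun 2 ℝ (Fin n)).toMatrix ⇑bb := by
      ext i j
      simp only [Matrix.map_apply, Basis.toMatrix_apply, PiLp.basisFun_repr, Bmat,
        Matrix.of_apply]
      exact (hM j i).symm
    have hunit : IsUnit ((PiLp.basisFun 2 ℝ (Fin n)).det ⇑bb) :=
      (PiLp.basisFun 2 ℝ (Fin n)).isUnit_det bb
    rw [Basis.det_apply, ← hmat] at hunit
    have hh : ((Bmat.det : ℤ) : ℝ) = (Bmat.map (Int.cast : ℤ → ℝ)).det :=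
      RingHom.map_det (Int.castRingHom ℝ) Bmat
    rw [hh]
    exact hunit.ne_zero
  have hgamma : ∀ i : Fin n, (∑ j, ((Bmat.adjugate j i : ℤ) : ℝ) • bb j) ∈ Γ := by
    intro i
    refine AddSubgroup.sum_mem Γ fun j _ => ?_
    rw [Int.cast_smul_eq_zsmul]
    exact AddSubgroup.zsmul_mem Γ (hbmem j) _
  have hinner : ∀ i : Fin n,
      ⟪(∑ j, ((Bmat.adjugate j i : ℤ) : ℝ) • bb j), h⟫_ℝ = ((Bmat.det : ℤ) : ℝ) * h i := by
    intro i
    rw [sum_inner]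
    have hterm : ∀ j, ⟪((Bmat.adjugate j i : ℤ) : ℝ) • bb j, h⟫_ℝ
        = ∑ l, ((Bmat.adjugate j i : ℤ) : ℝ) * (((Bmat l j : ℤ) : ℝ) * h l) := by
      intro j
      rw [real_inner_smul_left, PiLp.inner_apply, Finset.mul_sum]
      refine Finset.sum_congr rfl fun l _ => ?_
      congr 1
      simp only [RCLike.inner_apply, conj_trivial]
      rw [hM j l]
      exact mul_comm _ _
    simp_rw [hterm]
    rw [Finset.sum_comm]
    have hcol : ∀ l, (∑ j, ((Bmat.adjugate j i : ℤ) : ℝ) * (((Bmat l j : ℤ) : ℝ) * h l))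
        = (((Bmat * Bmat.adjugate) l i : ℤ) : ℝ) * h l := by
      intro l
      rw [Matrix.mul_apply]
      push_cast
      rw [Finset.sum_mul]
      exact Finset.sum_congr rfl fun j _ => by ring
    simp_rw [hcol, Matrix.mul_adjugate, Matrix.smul_apply, Matrix.one_apply]
    simp [Finset.sum_ite_eq', ite_mul, mul_ite]
  have hd : ((Bmat.det : ℤ) : ℝ) • h ∈ (G : Set _) ∩ intPoints n := by
    constructor
    · rw [Int.cast_smul_eq_zsmul]
      exact AddSubgroup.zsmul_mem G hG _
    · intro i
      obtain ⟨k, hk⟩ := hall _ (hgamma i)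
      refine ⟨k, ?_⟩
      have happ : (((Bmat.det : ℤ) : ℝ) • h) i = ((Bmat.det : ℤ) : ℝ) * h i := rfl
      rw [happ, ← hinner i, hk]
  have h0 : ((Bmat.det : ℤ) : ℝ) • h = 0 := by
    have := hint ▸ hd
    simpa using this
  exact (smul_eq_zero.mp h0).resolve_left hdet

/-- if `G` is finitely generated with `G ∩ ℤⁿ = {0}`, then for any
finite `F ⊆ G`, `ε > 0` and full rank sublattice `Γ ⊆ ℤⁿ`, one has `F^{*,ε} + Γ = ℝⁿ`. -/
theorem stmt5 {n : ℕ} (G : AddSubgroup (EuclideanSpace ℝ (Fin n)))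
    (hfg : G.FG) (hint : (G : Set _) ∩ intPoints n = {0})
    (F : Set (EuclideanSpace ℝ (Fin n))) (hF : F.Finite) (hFG : F ⊆ G)
    (ε : ℝ) (hε : 0 < ε)
    (Γ : AddSubgroup (EuclideanSpace ℝ (Fin n)))
    (hΓsub : (Γ : Set _) ⊆ intPoints n) (hΓ : IsFullLattice Γ) :
    ∀ x : EuclideanSpace ℝ (Fin n), ∃ y ∈ approxDual F ε, ∃ γ ∈ Γ, x = y + γ := by
  classical
  intro x
  let ι := {g : EuclideanSpace ℝ (Fin n) // g ∈ hF.toFinset}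
  let Lmap : EuclideanSpace ℝ (Fin n) → EuclideanSpace ℝ ι :=
    fun z => WithLp.toLp 2 (fun i => ⟪(i : ι).1, z⟫_ℝ : ι → ℝ)
  have hLapp : ∀ z (i : ι), Lmap z i = ⟪(i : ι).1, z⟫_ℝ := fun z i => rfl
  let Lhom : EuclideanSpace ℝ (Fin n) →+ EuclideanSpace ℝ ι :=
    { toFun := Lmap
      map_zero' := by ext i; exact inner_zero_right _
      map_add' := fun a b => by ext i; exact inner_add_right _ _ _ }
  let Zsub : AddSubgroup (EuclideanSpace ℝ ι) :=
    { carrier := {z | ∀ i, ∃ k : ℤ, z i = (k : ℝ)}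
      zero_mem' := fun i => ⟨0, by push_cast; rfl⟩
      add_mem' := by
        rintro a b ha hb i
        obtain ⟨ka, hka⟩ := ha i
        obtain ⟨kb, hkb⟩ := hb i
        refine ⟨ka + kb, ?_⟩
        push_cast
        rw [← hka, ← hkb]
        rfl
      neg_mem' := by
        rintro a ha i
        obtain ⟨ka, hka⟩ := ha i
        refine ⟨-ka, ?_⟩
        push_cast
        rw [← hka]
        rfl }
  let J : AddSubgroup (EuclideanSpace ℝ ι) := Zsub ⊔ Γ.map Lhom
  let H := J.topologicalClosure
  have hHc : IsClosed (H : Set (EuclideanSpace ℝ ι)) := AddSubgroup.isClosed_topologicalClosure J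
  have hJH : J ≤ H := AddSubgroup.le_topologicalClosure J
  have hmemH : Lmap x ∈ H := by
    apply mem_of_dual H hHc
    intro ξ hξ
    have hsingle : ∀ i : ι, EuclideanSpace.single i (1 : ℝ) ∈ Zsub := by
      intro i j
      refine ⟨if j = i then 1 else 0, ?_⟩
      rw [EuclideanSpace.single_apply]
      split <;> simp
    have hm : ∀ i : ι, ∃ k : ℤ, ξ i = (k : ℝ) := by
      intro i
      obtain ⟨k, hk⟩ := hξ _ (hJH ((le_sup_left : Zsub ≤ J) (hsingle i)))
      refine ⟨k, ?_⟩
      rw [← hk, EuclideanSpace.inner_single_right]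
      simp
    choose m hmm using hm
    let h₀ : EuclideanSpace ℝ (Fin n) := ∑ i : ι, ((m i : ℤ) : ℝ) • (i : ι).1
    have hinnerL : ∀ z, ⟪ξ, Lmap z⟫_ℝ = ⟪h₀, z⟫_ℝ := by
      intro z
      rw [PiLp.inner_apply, sum_inner]
      refine Finset.sum_congr rfl fun i _ => ?_
      rw [real_inner_smul_left, hLapp z i]
      simp only [RCLike.inner_apply, conj_trivial]
      rw [hmm i, mul_comm]
    have hG0 : h₀ ∈ G := by
      refine AddSubgroup.sum_mem _ fun i _ => ?_
      rw [Int.cast_smul_eq_zsmul]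
      exact G.zsmul_mem (hFG (hF.mem_toFinset.mp i.2)) _
    have hker : h₀ = 0 := by
      apply kernel_zero G hint Γ hΓsub hΓ h₀ hG0
      intro γ hγ
      have hLγ : Lmap γ ∈ H :=
        hJH ((le_sup_right : Γ.map Lhom ≤ J) (AddSubgroup.mem_map.mpr ⟨γ, hγ, rfl⟩))
      obtain ⟨k, hk⟩ := hξ _ hLγ
      refine ⟨k, ?_⟩
      rw [real_inner_comm, ← hinnerL γ]
      exact hk
    refine ⟨0, ?_⟩
    rw [hinnerL x, hker]
    simp
  have hcl : Lmap x ∈ closure (J : Set (EuclideanSpace ℝ ι)) := hmemH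
  obtain ⟨z, hzJ, hdist⟩ := Metric.mem_closure_iff.mp hcl ε hε
  obtain ⟨a, haZ, bγ, hbγ, hab⟩ := AddSubgroup.mem_sup.mp hzJ
  obtain ⟨γ, hγΓ, rfl⟩ := AddSubgroup.mem_map.mp hbγ
  refine ⟨x - γ, ?_, γ, hγΓ, by abel⟩
  intro g hg
  let i : ι := ⟨g, hF.mem_toFinset.mpr hg⟩
  obtain ⟨k, hk⟩ := haZ i
  refine ⟨k, ?_⟩
  have h1 : (inner ℝ (x - γ) g : ℝ) - (k : ℝ) = (Lmap x - z) i := by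
    rw [← hab]
    have h2 : (Lmap x - (a + Lhom γ)) i = Lmap x i - (a i + Lmap γ i) := rfl
    rw [h2, ← hk, hLapp, hLapp]
    have h3 : (inner ℝ (x - γ) g : ℝ) = ⟪x - γ, g⟫_ℝ := rfl
    rw [h3, inner_sub_left, real_inner_comm x g, real_inner_comm γ g]
    ring
  rw [h1]
  calc |(Lmap x - z) i| ≤ ‖Lmap x - z‖ := abs_apply_le_norm _ i
    _ = dist (Lmap x) z := (dist_eq_norm _ _).symm
    _ ≤ ε := hdist.le
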